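/- Let x, y ∈ (1/2, e/(1+e)) be distinct reals with ln(x/(1-x)) - ln(y/(1-y)) irrational, and let f be the homeomorphism of the closed unit disk defined in the construction. Then {x, y} is a Li-Yorke chaotic pair for f: liminf_{n→∞} |fⁿ(x) - fⁿ(y)| = 0 and limsup_{n→∞} |fⁿ(x) - fⁿ(y)| > 0 (in fact ≥ 2 along a subsequence of times 2^{n_k}-1). -/

import Mathlib

/-- The function ξ from the paper. -/
noncomputable def xi (r : ℝ) : ℝ :=
  if r ≤ 1 then 0
  else
    if Even ⌊Real.log r⌋ then
      (Real.log r - (⌊Real.log r⌋ : ℝ)) /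
        (2 : ℝ) ^ (⌊Real.logb 2 (((⌊Real.log r / 2⌋ + 1 : ℤ) : ℝ))⌋)
    else
      (1 - (Real.log r - (⌊Real.log r⌋ : ℝ))) /
        (2 : ℝ) ^ (⌊Real.logb 2 (((⌊Real.log r / 2⌋ + 1 : ℤ) : ℝ))⌋)

/-- The map f from the paper, as a map of ℂ (it preserves the closed unit disk). -/
noncomputable def fMap (z : ℂ) : ℂ :=
  if ‖z‖ = 0 ∨ ‖z‖ = 1 then z
  else (Real.exp 2 : ℂ) * z / ((Real.exp 2 * ‖z‖ - ‖z‖ + 1 : ℝ) : ℂ) *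
    Complex.exp (2 * Real.pi * Complex.I * xi (‖z‖ / (1 - ‖z‖)))

open Filter Real Complex Finset

/-! ### Auxiliary definitions -/

/-- Accumulated angle coefficient. -/
noncomputable def Sang (N : ℕ) : ℝ :=
  ∑ k ∈ Finset.range N, ((2:ℝ) ^ (⌊Real.logb 2 ((k:ℝ)+1)⌋ : ℤ))⁻¹

/-- Radius after `N` iterations, for a point with `log (x/(1-x)) = t`. -/
noncomputable def rad (t : ℝ) (N : ℕ) : ℝ :=
  Real.exp (2*N + t) / (1 + Real.exp (2*N + t))

/-- Rotation by angle `2 π a`. -/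
noncomputable def expE (a : ℝ) : ℂ := Complex.exp (2*Real.pi*Complex.I*(a:ℂ))

/-! ### Floor-log computations -/

lemma floor_logb_nat (j m : ℕ) (h1 : 2^j ≤ m) (h2 : m < 2^(j+1)) :
    ⌊Real.logb 2 (m:ℝ)⌋ = j := by
  have : ((2:ℝ)) = ((2:ℕ):ℝ) := by norm_num
  rw [this, Real.floor_logb_natCast (by positivity), Int.log_natCast]
  exact_mod_cast Nat.log_eq_of_pow_le_of_lt_pow h1 h2

lemma Sang_pow (n : ℕ) : Sang (2^n - 1) = n := by
  induction n with
  | zero => simp [Sang]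
  | succ n ih =>
    have h1 : 2^n - 1 ≤ 2^(n+1) - 1 := by
      have := Nat.one_le_two_pow (n := n)
      have := Nat.pow_le_pow_right (by norm_num : 1 ≤ 2) (Nat.le_succ n)
      omega
    rw [Sang, Finset.range_eq_Ico, ← Finset.sum_Ico_consecutive _ (Nat.zero_le (2^n-1)) h1]
    have e1 : ∑ k ∈ Finset.Ico (0:ℕ) (2^n - 1), ((2:ℝ) ^ (⌊Real.logb 2 ((k:ℝ)+1)⌋ : ℤ))⁻¹ = n := by
      rw [← Finset.range_eq_Ico]; exact ih
    have e2 : ∑ k ∈ Finset.Ico (2^n - 1 : ℕ) (2^(n+1) - 1),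
        ((2:ℝ) ^ (⌊Real.logb 2 ((k:ℝ)+1)⌋ : ℤ))⁻¹ = 1 := by
      have hconst : ∀ k ∈ Finset.Ico (2^n - 1 : ℕ) (2^(n+1) - 1),
          ((2:ℝ) ^ (⌊Real.logb 2 ((k:ℝ)+1)⌋ : ℤ))⁻¹ = ((2:ℝ)^n)⁻¹ := by
        intro k hk
        simp only [Finset.mem_Ico] at hk
        have hp : (1:ℕ) ≤ 2^n := Nat.one_le_two_pow
        have h1 : 2^n ≤ k+1 := by omega
        have h2 : k+1 < 2^(n+1) := by omega
        have : ((k:ℝ)+1) = ((k+1:ℕ):ℝ) := by push_cast; ring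
        rw [this, floor_logb_nat n (k+1) h1 h2]
        norm_num
      rw [Finset.sum_congr rfl hconst, Finset.sum_const, Nat.card_Ico]
      have hcard : 2^(n+1) - 1 - (2^n - 1) = 2^n := by
        have hp : (1:ℕ) ≤ 2^n := Nat.one_le_two_pow
        have : 2^(n+1) = 2 * 2^n := by ring
        omega
      rw [hcard]
      simp
    rw [e1, e2]; push_cast; ring

/-! ### The value of ξ along the orbit -/

lemma xi_exp (t : ℝ) (ht0 : 0 < t) (ht1 : t < 1) (N : ℕ) :
    xi (Real.exp (2*N + t)) = t / (2:ℝ) ^ (⌊Real.logb 2 ((N:ℝ)+1)⌋ : ℤ) := by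
  have hpos : (0:ℝ) < 2*N + t := by positivity
  have hgt : ¬ Real.exp (2*N + t) ≤ 1 := by
    rw [not_le, ← Real.exp_zero]
    exact Real.exp_lt_exp.mpr hpos
  have hlog : Real.log (Real.exp (2*N + t)) = 2*N + t := Real.log_exp _
  have hfl : ⌊(2*(N:ℝ) + t)⌋ = 2*N := by
    rw [Int.floor_eq_iff]
    constructor
    · push_cast; linarith
    · push_cast; linarith
  have hfl2 : ⌊(2*(N:ℝ) + t)/2⌋ = N := by
    rw [Int.floor_eq_iff]
    constructor
    · push_cast; linarith
    · push_cast; linarith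
  have heven : Even ((2*N : ℤ)) := ⟨N, by ring⟩
  rw [xi, if_neg hgt, hlog, hfl, hfl2, if_pos (by exact_mod_cast heven)]
  push_cast
  ring

/-! ### Basic facts about the radius -/

lemma rad_pos (t : ℝ) (N : ℕ) : 0 < rad t N := by
  have := Real.exp_pos (2*N + t); unfold rad; positivity

lemma rad_lt_one (t : ℝ) (N : ℕ) : rad t N < 1 := by
  have h := Real.exp_pos (2*(N:ℝ) + t)
  rw [rad, div_lt_one (by linarith)]; linarith

lemma one_sub_rad (t : ℝ) (N : ℕ) : 1 - rad t N = 1 / (1 + Real.exp (2*N + t)) := by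
  have h := Real.exp_pos (2*(N:ℝ) + t)
  rw [rad]; field_simp; ring

lemma rad_ratio (t : ℝ) (N : ℕ) : rad t N / (1 - rad t N) = Real.exp (2*N + t) := by
  have h := Real.exp_pos (2*(N:ℝ) + t)
  rw [one_sub_rad, rad]; field_simp

lemma rad_step (t : ℝ) (N : ℕ) :
    Real.exp 2 * rad t N / (Real.exp 2 * rad t N - rad t N + 1) = rad t (N+1) := by
  have h := Real.exp_pos (2*(N:ℝ) + t)
  have he2 := Real.exp_pos (2:ℝ)
  have hkey : Real.exp (2*((N:ℝ)+1) + t) = Real.exp 2 * Real.exp (2*N + t) := by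
    rw [← Real.exp_add]; ring_nf
  have hc : (0:ℝ) < Real.exp 2 * rad t N - rad t N + 1 := by
    nlinarith [Real.one_lt_exp_iff.mpr (by norm_num : (0:ℝ) < 2), rad_pos t N, rad_lt_one t N]
  rw [rad, rad]
  push_cast
  rw [hkey]
  have h1 : (0:ℝ) < 1 + Real.exp (2*N + t) := by linarith
  field_simp
  rw [div_eq_one_iff_eq (by nlinarith)]
  ring

lemma one_sub_rad_le (t : ℝ) (ht : 0 < t) (N : ℕ) : 1 - rad t N ≤ 1/(2 + 2*(N:ℝ)) := by
  rw [one_sub_rad]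
  have h1 : 2 + 2*(N:ℝ) ≤ 1 + Real.exp (2*N + t) := by
    have := Real.add_one_le_exp (2*(N:ℝ) + t)
    linarith
  have h2 : (0:ℝ) < 2 + 2*(N:ℝ) := by positivity
  exact one_div_le_one_div_of_le h2 h1

lemma rad_close (t ε : ℝ) (ht : 0 < t) (hε : 0 < ε) (N : ℕ) (hN : 4/ε ≤ (N:ℝ)) :
    1 - rad t N ≤ ε/4 := by
  refine le_trans (one_sub_rad_le t ht N) ?_
  rw [div_le_div_iff₀ (by positivity) (by norm_num)]
  have h4 : 4 ≤ ε * N := by rw [div_le_iff₀ hε] at hN; linarith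
  nlinarith [hε]

/-! ### Polar form of `fMap` and the iterate formula -/

lemma abs_expE' (a : ℝ) : ‖expE a‖ = 1 := by
  have h : (2*Real.pi*Complex.I*(a:ℂ)) = ((2*Real.pi*a : ℝ):ℂ)*Complex.I := by push_cast; ring
  rw [expE, h, Complex.norm_exp_ofReal_mul_I]

lemma fMap_polar (ρ θ : ℝ) (h0 : 0 < ρ) (h1 : ρ < 1) :
    fMap ((ρ:ℂ) * Complex.exp (2*Real.pi*Complex.I*(θ:ℂ)))
      = ((Real.exp 2 * ρ / (Real.exp 2 * ρ - ρ + 1) : ℝ):ℂ) *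
        Complex.exp (2*Real.pi*Complex.I*((θ + xi (ρ/(1-ρ)) : ℝ):ℂ)) := by
  have habs : ‖(ρ:ℂ) * Complex.exp (2*Real.pi*Complex.I*(θ:ℂ))‖ = ρ := by
    rw [norm_mul, show Complex.exp (2*Real.pi*Complex.I*(θ:ℂ)) = expE θ from rfl,
      abs_expE', Complex.norm_real, Real.norm_eq_abs, abs_of_pos h0, mul_one]
  have hc : (0:ℝ) < Real.exp 2 * ρ - ρ + 1 := by
    nlinarith [Real.one_lt_exp_iff.mpr (by norm_num : (0:ℝ) < 2)]
  rw [fMap, if_neg (by rw [habs]; push_neg; exact ⟨h0.ne', h1.ne⟩), habs]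
  push_cast
  rw [mul_add, Complex.exp_add]
  have hcne : ((Real.exp 2 * ρ - ρ + 1 : ℝ):ℂ) ≠ 0 := by
    exact_mod_cast hc.ne'
  push_cast at hcne ⊢
  field_simp

lemma x_facts (x : ℝ) (hx : x ∈ Set.Ioo (1 / 2 : ℝ) (Real.exp 1 / (1 + Real.exp 1))) :
    0 < 1 - x ∧ 0 < Real.log (x/(1-x)) ∧ Real.log (x/(1-x)) < 1 := by
  obtain ⟨hx1, hx2⟩ := hx
  have he := Real.exp_pos 1
  have he1 : (1:ℝ) < Real.exp 1 := Real.one_lt_exp_iff.mpr one_pos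
  have hd : (0:ℝ) < 1 + Real.exp 1 := by linarith
  have hxlt : x < 1 := lt_of_lt_of_le hx2 (by rw [div_le_one hd]; linarith)
  have h1x : 0 < 1 - x := by linarith
  have hratio1 : 1 < x/(1-x) := by
    rw [lt_div_iff₀ h1x]; linarith
  have hratio2 : x/(1-x) < Real.exp 1 := by
    rw [div_lt_iff₀ h1x]
    have : x * (1 + Real.exp 1) < Real.exp 1 := by
      calc x * (1 + Real.exp 1) < (Real.exp 1 / (1 + Real.exp 1)) * (1 + Real.exp 1) := by
            exact mul_lt_mul_of_pos_right hx2 hd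
        _ = Real.exp 1 := by field_simp
    nlinarith
  refine ⟨h1x, ?_, ?_⟩
  · exact Real.log_pos hratio1
  · calc Real.log (x/(1-x)) < Real.log (Real.exp 1) :=
          Real.log_lt_log (by linarith) hratio2
      _ = 1 := Real.log_exp 1

lemma iterate_formula (x : ℝ) (hx : x ∈ Set.Ioo (1 / 2 : ℝ) (Real.exp 1 / (1 + Real.exp 1)))
    (N : ℕ) :
    fMap^[N] (x:ℂ) = ((rad (Real.log (x/(1-x))) N : ℝ) : ℂ) *
      Complex.exp (2*Real.pi*Complex.I*((Sang N * Real.log (x/(1-x)) : ℝ):ℂ)) := by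
  obtain ⟨h1x, ht0, ht1⟩ := x_facts x hx
  set t := Real.log (x/(1-x)) with htdef
  have hxpos : 0 < x := by nlinarith [hx.1]
  have hexpt : Real.exp t = x/(1-x) := Real.exp_log (by positivity)
  induction N with
  | zero =>
    simp only [Function.iterate_zero, id_eq, Sang, Finset.range_zero, Finset.sum_empty,
      zero_mul]
    have hr0 : rad t 0 = x := by
      rw [rad]
      push_cast
      rw [show 2*(0:ℝ) + t = t by ring, hexpt]
      field_simp
      ring
    rw [hr0]
    push_cast
    simp
  | succ N ih =>
    rw [Function.iterate_succ_apply', ih,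
      fMap_polar _ _ (rad_pos t N) (rad_lt_one t N)]
    rw [show rad t N / (1 - rad t N) = Real.exp (2*N + t) from rad_ratio t N]
    rw [xi_exp t ht0 ht1 N, rad_step t N]
    have hS : Sang N * t + t / (2:ℝ)^(⌊Real.logb 2 ((N:ℝ)+1)⌋:ℤ) = Sang (N+1) * t := by
      simp only [Sang, Finset.sum_range_succ]
      ring
    rw [hS]

/-! ### Density of the irrational rotation orbit -/

lemma freq_near (δ : ℝ) (hδ : Irrational δ) (c : ℝ) (ε : ℝ) (hε : 0 < ε) (M : ℕ) :
    ∃ k : ℕ, M ≤ k ∧ ∃ m : ℤ, |k * δ - c - m| < ε := by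
  obtain ⟨n, hn⟩ := exists_nat_gt (1/ε)
  have hn1 : 0 < n + 1 := Nat.succ_pos n
  obtain ⟨j, k0, hk0, hk0n, hjk⟩ := Real.exists_int_int_abs_mul_sub_le δ hn1
  lift k0 to ℕ using hk0.le with a
  have ha : 0 < a := by exact_mod_cast hk0
  set β := (a:ℝ) * δ - j with hβdef
  have hjk' : |β| ≤ 1 / ((n:ℝ) + 1 + 1) := by
    convert hjk using 3 <;> push_cast <;> ring
  have hβne : β ≠ 0 := by
    intro h
    have hirr : Irrational ((a:ℕ) * δ) := hδ.natCast_mul ha.ne'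
    exact hirr.ne_int j (by linarith [h])
  have hβε : |β| < ε := by
    refine lt_of_le_of_lt hjk' ?_
    rw [div_lt_iff₀ (by positivity)]
    have h1 : 1 < (n:ℝ) * ε := (div_lt_iff₀ hε).mp hn
    nlinarith [h1, hε]
  rcases lt_or_gt_of_ne hβne with hneg | hpos
  · -- β < 0
    set L : ℕ := max M ⌈|c| + 1 + M * |β|⌉₊ with hLdef
    have hL : |c| + 1 + M * |β| ≤ (L:ℝ) := by
      refine le_trans (Nat.le_ceil _) ?_
      exact_mod_cast Nat.cast_le.mpr (le_max_right _ _)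
    have habs : |β| = -β := abs_of_neg hneg
    set kz : ℤ := ⌈(c - L)/β⌉ with hkdef
    have hk1 : (c - L)/β ≤ (kz:ℝ) := Int.le_ceil _
    have hk2 : (kz:ℝ) < (c - L)/β + 1 := Int.ceil_lt_add_one _
    have hkM : (M:ℝ) < (kz:ℝ) := by
      have hq : (M:ℝ) < (c - L)/β := by
        rw [lt_div_iff_of_neg hneg]
        have h1 : -|c| ≤ c := neg_abs_le c
        have h2 : c ≤ |c| := le_abs_self c
        rw [habs] at hL
        nlinarith
      linarith
    have hknn : (0:ℤ) ≤ kz := by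
      have h0 := lt_of_le_of_lt (by positivity : (0:ℝ) ≤ (M:ℝ)) hkM
      exact_mod_cast h0.le
    obtain ⟨q, hq⟩ : ∃ q:ℕ, (q:ℤ) = kz := ⟨kz.toNat, Int.toNat_of_nonneg hknn⟩
    have hqR : ((q:ℕ):ℝ) = (kz:ℝ) := by exact_mod_cast congrArg (Int.cast : ℤ → ℝ) hq
    have hkβ1 : (kz:ℝ)*β ≤ c - L := by
      rw [div_le_iff_of_neg hneg] at hk1; linarith
    have hkβ2 : c - L + β < (kz:ℝ)*β := by
      have := mul_lt_mul_of_neg_right hk2 hneg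
      rw [add_mul, div_mul_cancel₀ _ hβne] at this
      linarith
    refine ⟨q * a, ?_, q*j - L, ?_⟩
    · have h1 : (M:ℝ) < q := by rw [hqR]; exact hkM
      have h2 : M < q := by exact_mod_cast h1
      calc M ≤ q := h2.le
        _ = q * 1 := (mul_one _).symm
        _ ≤ q * a := Nat.mul_le_mul_left _ ha
    · have hexp : ((q*a:ℕ):ℝ) * δ - c - ((↑q*j - L : ℤ):ℝ) = (kz:ℝ)*β - (c - L) := by
        push_cast
        rw [← hqR, hβdef]; ring
      rw [hexp, abs_lt]
      rw [habs] at hβε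
      constructor <;> linarith
  · -- β > 0
    set L : ℕ := max M ⌈|c| + 1 + M * |β|⌉₊ with hLdef
    have hL : |c| + 1 + M * |β| ≤ (L:ℝ) := by
      refine le_trans (Nat.le_ceil _) ?_
      exact_mod_cast Nat.cast_le.mpr (le_max_right _ _)
    have habs : |β| = β := abs_of_pos hpos
    set kz : ℤ := ⌈(c + L)/β⌉ with hkdef
    have hk1 : (c + L)/β ≤ (kz:ℝ) := Int.le_ceil _
    have hk2 : (kz:ℝ) < (c + L)/β + 1 := Int.ceil_lt_add_one _
    have hkM : (M:ℝ) < (kz:ℝ) := by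
      have hq : (M:ℝ) < (c + L)/β := by
        rw [lt_div_iff₀ hpos]
        have h1 : -|c| ≤ c := neg_abs_le c
        have h2 : c ≤ |c| := le_abs_self c
        rw [habs] at hL
        nlinarith
      linarith
    have hknn : (0:ℤ) ≤ kz := by
      have h0 := lt_of_le_of_lt (by positivity : (0:ℝ) ≤ (M:ℝ)) hkM
      exact_mod_cast h0.le
    obtain ⟨q, hq⟩ : ∃ q:ℕ, (q:ℤ) = kz := ⟨kz.toNat, Int.toNat_of_nonneg hknn⟩
    have hqR : ((q:ℕ):ℝ) = (kz:ℝ) := by exact_mod_cast congrArg (Int.cast : ℤ → ℝ) hq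
    have hkβ1 : c + L ≤ (kz:ℝ)*β := by
      rw [div_le_iff₀ hpos] at hk1; linarith
    have hkβ2 : (kz:ℝ)*β < c + L + β := by
      have := mul_lt_mul_of_pos_right hk2 hpos
      rw [add_mul, div_mul_cancel₀ _ hβne] at this
      linarith
    refine ⟨q * a, ?_, q*j + L, ?_⟩
    · have h1 : (M:ℝ) < q := by rw [hqR]; exact hkM
      have h2 : M < q := by exact_mod_cast h1
      calc M ≤ q := h2.le
        _ = q * 1 := (mul_one _).symm
        _ ≤ q * a := Nat.mul_le_mul_left _ ha
    · have hexp : ((q*a:ℕ):ℝ) * δ - c - ((↑q*j + L : ℤ):ℝ) = (kz:ℝ)*β - (c + L) := by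
        push_cast
        rw [← hqR, hβdef]; ring
      rw [hexp, abs_lt]
      rw [habs] at hβε
      constructor <;> linarith

/-! ### Estimates on the unit circle -/

lemma expE_sub_shift (a b : ℝ) (m : ℤ) :
    ‖expE a - expE b‖ = ‖expE (a - b - m) - 1‖ := by
  have h1 : (2*Real.pi*Complex.I*(a:ℂ)) = 2*Real.pi*Complex.I*(b:ℂ)
      + (2*Real.pi*Complex.I*((a - b - m : ℝ):ℂ) + (m:ℂ)*(2*Real.pi*Complex.I)) := by
    push_cast; ring
  rw [expE, expE, expE, h1, Complex.exp_add, Complex.exp_add,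
    Complex.exp_int_mul_two_pi_mul_I, mul_one]
  have hfac : Complex.exp (2*Real.pi*Complex.I*(b:ℂ)) * Complex.exp (2*Real.pi*Complex.I*((a - b - m : ℝ):ℂ))
      - Complex.exp (2*Real.pi*Complex.I*(b:ℂ))
      = Complex.exp (2*Real.pi*Complex.I*(b:ℂ)) * (Complex.exp (2*Real.pi*Complex.I*((a - b - m : ℝ):ℂ)) - 1) := by
    ring
  rw [hfac, norm_mul]
  rw [show Complex.exp (2*Real.pi*Complex.I*(b:ℂ)) = expE b from rfl, abs_expE', one_mul]

lemma abs_arg2 (cr : ℝ) : ‖2*Real.pi*Complex.I*(cr:ℂ)‖ = 2*Real.pi*|cr| := by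
  rw [norm_mul, norm_mul, norm_mul]
  simp [abs_of_pos Real.pi_pos]

lemma expE_sub_one_le (c : ℝ) (h : 2*Real.pi*|c| ≤ 1) :
    ‖expE c - 1‖ ≤ 2*(2*Real.pi*|c|) := by
  have := Complex.norm_exp_sub_one_le (x := 2*Real.pi*Complex.I*(c:ℂ)) (by rw [abs_arg2]; exact h)
  rw [abs_arg2] at this
  exact this

lemma expE_half_lower (θ : ℝ) (h : 2*Real.pi*|θ| ≤ 1) :
    2 - 2*(2*Real.pi*|θ|) ≤ ‖expE (1/2 + θ) - 1‖ := by
  have h1 : (2*Real.pi*Complex.I*((1/2 + θ : ℝ):ℂ)) = Real.pi*Complex.I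
      + 2*Real.pi*Complex.I*(θ:ℂ) := by push_cast; ring
  rw [expE, h1, Complex.exp_add, Complex.exp_pi_mul_I]
  have hw : (-1 : ℂ) * Complex.exp (2*Real.pi*Complex.I*(θ:ℂ)) - 1
      = -((2:ℂ) + (expE θ - 1)) := by rw [expE]; ring
  rw [hw, norm_neg]
  have h2 : 2 - ‖expE θ - 1‖ ≤ ‖(2:ℂ) + (expE θ - 1)‖ := by
    have h0 : ‖(2:ℂ)‖ ≤ ‖(2:ℂ) + (expE θ - 1)‖ + ‖expE θ - 1‖ := by
      have he : (2:ℂ) = ((2:ℂ) + (expE θ - 1)) - (expE θ - 1) := by ring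
      calc ‖(2:ℂ)‖ = ‖((2:ℂ) + (expE θ - 1)) - (expE θ - 1)‖ := by rw [← he]
        _ ≤ _ := norm_sub_le _ _
    have hn : ‖(2:ℂ)‖ = 2 := by norm_num
    rw [hn] at h0
    linarith
  have h4 := expE_sub_one_le θ h
  linarith

lemma dist_poly (ρ1 ρ2 a b : ℝ) (h1 : ρ1 ≤ 1) (h2 : ρ2 ≤ 1) :
    ‖(ρ1:ℂ)*expE a - (ρ2:ℂ)*expE b‖
      ≤ (1-ρ1) + (1-ρ2) + ‖expE a - expE b‖
    ∧ ‖expE a - expE b‖ - (1-ρ1) - (1-ρ2)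
      ≤ ‖(ρ1:ℂ)*expE a - (ρ2:ℂ)*expE b‖ := by
  set D := (ρ1:ℂ)*expE a - (ρ2:ℂ)*expE b with hD
  set W := expE a - expE b with hW
  have hDW : ‖D - W‖ ≤ (1-ρ1) + (1-ρ2) := by
    have : D - W = ((ρ1:ℂ)-1)*expE a - ((ρ2:ℂ)-1)*expE b := by rw [hD, hW]; ring
    rw [this]
    refine le_trans (norm_sub_le _ _) ?_
    rw [norm_mul, norm_mul, abs_expE', abs_expE', mul_one, mul_one]
    have e1 : ‖(ρ1:ℂ)-1‖ = 1 - ρ1 := by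
      rw [show ((ρ1:ℂ)-1) = ((ρ1 - 1 : ℝ):ℂ) by push_cast; ring, Complex.norm_real, Real.norm_eq_abs,
        abs_of_nonpos (by linarith)]
      ring
    have e2 : ‖(ρ2:ℂ)-1‖ = 1 - ρ2 := by
      rw [show ((ρ2:ℂ)-1) = ((ρ2 - 1 : ℝ):ℂ) by push_cast; ring, Complex.norm_real, Real.norm_eq_abs,
        abs_of_nonpos (by linarith)]
      ring
    rw [e1, e2]
  constructor
  · have : ‖D‖ ≤ ‖W‖ + ‖D - W‖ := by
      have := norm_add_le W (D - W)
      simpa [add_sub_cancel] using this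
    linarith
  · have : ‖W‖ ≤ ‖D‖ + ‖D - W‖ := by
      have := norm_add_le D (W - D)
      rw [add_sub_cancel] at this
      rw [← norm_neg (D - W)] at hDW ⊢
      simp only [neg_sub] at *
      linarith [this]
    linarith

theorem fMap_liYorke_pair (x y : ℝ)
    (hx : x ∈ Set.Ioo (1 / 2 : ℝ) (Real.exp 1 / (1 + Real.exp 1)))
    (hy : y ∈ Set.Ioo (1 / 2 : ℝ) (Real.exp 1 / (1 + Real.exp 1)))
    (hxy : x ≠ y)
    (hirr : Irrational (Real.log (x / (1 - x)) - Real.log (y / (1 - y)))) :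
    Filter.liminf (fun n : ℕ => ‖fMap^[n] (x : ℂ) - fMap^[n] (y : ℂ)‖)
        Filter.atTop = 0 ∧
    2 ≤ Filter.limsup (fun n : ℕ => ‖fMap^[n] (x : ℂ) - fMap^[n] (y : ℂ)‖)
        Filter.atTop := by
  obtain ⟨h1x, htx0, htx1⟩ := x_facts x hx
  obtain ⟨h1y, hty0, hty1⟩ := x_facts y hy
  set tx := Real.log (x/(1-x)) with htxdef
  set ty := Real.log (y/(1-y)) with htydef
  have hδ : Irrational (tx - ty) := hirr
  set u : ℕ → ℝ := fun n : ℕ => ‖fMap^[n] (x : ℂ) - fMap^[n] (y : ℂ)‖ with hudef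
  have hfx : ∀ N, fMap^[N] (x:ℂ) = ((rad tx N : ℝ):ℂ) * expE (Sang N * tx) :=
    fun N => iterate_formula x hx N
  have hfy : ∀ N, fMap^[N] (y:ℂ) = ((rad ty N : ℝ):ℂ) * expE (Sang N * ty) :=
    fun N => iterate_formula y hy N
  have key : ∀ n : ℕ, u (2^n - 1)
      = ‖((rad tx (2^n-1) : ℝ):ℂ) * expE ((n:ℝ) * tx)
          - ((rad ty (2^n-1) : ℝ):ℂ) * expE ((n:ℝ) * ty)‖ := by
    intro n
    rw [hudef]
    simp only
    rw [hfx, hfy, Sang_pow]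
  have hub : ∀ n, u n ≤ 2 := by
    intro n
    rw [hudef]
    simp only
    rw [hfx, hfy]
    calc ‖_‖ ≤ ‖((rad tx n : ℝ):ℂ) * expE (Sang n * tx)‖
          + ‖((rad ty n : ℝ):ℂ) * expE (Sang n * ty)‖ := by
          exact norm_sub_le _ _
      _ ≤ 2 := by
          rw [norm_mul, norm_mul, abs_expE', abs_expE', mul_one, mul_one,
            Complex.norm_real, Real.norm_eq_abs, Complex.norm_real, Real.norm_eq_abs,
            abs_of_pos (rad_pos tx n), abs_of_pos (rad_pos ty n)]
          linarith [rad_lt_one tx n, rad_lt_one ty n]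
  have hlb : ∀ n, 0 ≤ u n := fun n => norm_nonneg _
  have hBddLe : IsBoundedUnder (· ≤ ·) atTop u := isBoundedUnder_of ⟨2, hub⟩
  have hBddGe : IsBoundedUnder (· ≥ ·) atTop u := isBoundedUnder_of ⟨0, hlb⟩
  have hπ := Real.pi_pos
  -- the frequently-near statements
  have main_est : ∀ ε : ℝ, 0 < ε → ∀ c : ℝ, ∀ M : ℕ, ∃ N : ℕ, M ≤ N ∧ ∃ k : ℕ, ∃ θ : ℝ,
      N = 2^k - 1 ∧ 1 - rad tx N ≤ ε/4 ∧ 1 - rad ty N ≤ ε/4 ∧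
      ‖expE ((k:ℝ)*tx) - expE ((k:ℝ)*ty)‖ = ‖expE (c + θ) - 1‖ ∧
      2*Real.pi*|θ| ≤ 1 ∧ 2*(2*Real.pi*|θ|) ≤ ε/4 := by
    intro ε hε c M
    have hε'pos : 0 < min (ε/(16*Real.pi)) (1/(4*Real.pi)) := by positivity
    obtain ⟨k, hkM, m, hkm⟩ := freq_near (tx - ty) hδ c
      (min (ε/(16*Real.pi)) (1/(4*Real.pi))) hε'pos (max M ⌈4/ε⌉₊)
    have hk2 : k ≤ 2^k - 1 := by
      have := Nat.lt_two_pow_self (n := k)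
      omega
    have hMk : M ≤ k := le_trans (le_max_left _ _) hkM
    have hceil : (4/ε : ℝ) ≤ (k:ℝ) := by
      have h1 : (⌈4/ε⌉₊ : ℕ) ≤ k := le_trans (le_max_right _ _) hkM
      calc (4/ε : ℝ) ≤ (⌈4/ε⌉₊ : ℝ) := Nat.le_ceil _
        _ ≤ (k:ℝ) := by exact_mod_cast h1
    have hNk : (4/ε : ℝ) ≤ ((2^k - 1 : ℕ):ℝ) := le_trans hceil (by exact_mod_cast hk2)
    set θ := (k:ℝ)*(tx - ty) - c - m with hθdef
    have hθabs : |θ| < min (ε/(16*Real.pi)) (1/(4*Real.pi)) := hkm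
    have hθ1 : 2*Real.pi*|θ| ≤ 1 := by
      have h1 : |θ| ≤ 1/(4*Real.pi) := le_of_lt (lt_of_lt_of_le hθabs (min_le_right _ _))
      calc 2*Real.pi*|θ| ≤ 2*Real.pi*(1/(4*Real.pi)) := by
            exact mul_le_mul_of_nonneg_left h1 (by positivity)
        _ = 1/2 := by field_simp; ring
        _ ≤ 1 := by norm_num
    have hθ2 : 2*(2*Real.pi*|θ|) ≤ ε/4 := by
      have h1 : |θ| ≤ ε/(16*Real.pi) := le_of_lt (lt_of_lt_of_le hθabs (min_le_left _ _))
      calc 2*(2*Real.pi*|θ|) ≤ 2*(2*Real.pi*(ε/(16*Real.pi))) := by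
            have := mul_le_mul_of_nonneg_left h1 (by positivity : (0:ℝ) ≤ 2*Real.pi)
            linarith
        _ = ε/4 := by field_simp; ring
    refine ⟨2^k - 1, le_trans hMk hk2, k, θ, rfl, ?_, ?_, ?_, hθ1, hθ2⟩
    · exact rad_close tx ε htx0 hε _ hNk
    · exact rad_close ty ε hty0 hε _ hNk
    · rw [expE_sub_shift ((k:ℝ)*tx) ((k:ℝ)*ty) m]
      congr 2
      rw [hθdef]
      ring
  constructor
  · -- liminf = 0
    have hge : (0:ℝ) ≤ liminf u atTop :=
      le_liminf_of_le hBddLe.isCoboundedUnder_ge (Eventually.of_forall hlb)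
    have hle : ∀ ε : ℝ, 0 < ε → liminf u atTop ≤ ε := by
      intro ε hε
      refine liminf_le_of_frequently_le ?_ hBddGe
      rw [frequently_atTop]
      intro M
      obtain ⟨N, hNM, k, θ, hNk, hrx, hry, hE, hθ1, hθ2⟩ := main_est ε hε 0 M
      refine ⟨N, hNM, ?_⟩
      have hkey := key k
      rw [← hNk] at hkey
      rw [hkey]
      have hd := (dist_poly (rad tx N) (rad ty N) ((k:ℝ)*tx) ((k:ℝ)*ty)
        (rad_lt_one tx N).le (rad_lt_one ty N).le).1
      refine le_trans hd ?_
      rw [hE]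
      have hE2 : ‖expE (0 + θ) - 1‖ ≤ ε/4 := by
        have h0 : expE (0 + θ) = expE θ := by norm_num
        rw [h0]
        exact le_trans (expE_sub_one_le θ hθ1) hθ2
      linarith
    have : liminf u atTop ≤ 0 := by
      refine le_of_forall_pos_le_add ?_
      intro ε hε
      simpa using hle ε hε
    linarith [hge, this]
  · -- 2 ≤ limsup
    refine le_of_forall_pos_le_add ?_
    intro ε hε
    have h2e : 2 - ε ≤ limsup u atTop := by
      refine le_limsup_of_frequently_le ?_ hBddLe
      rw [frequently_atTop]
      intro M
      obtain ⟨N, hNM, k, θ, hNk, hrx, hry, hE, hθ1, hθ2⟩ := main_est ε hε (1/2) M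
      refine ⟨N, hNM, ?_⟩
      have hkey := key k
      rw [← hNk] at hkey
      rw [hkey]
      have hd := (dist_poly (rad tx N) (rad ty N) ((k:ℝ)*tx) ((k:ℝ)*ty)
        (rad_lt_one tx N).le (rad_lt_one ty N).le).2
      have hE2 : 2 - ε/4 ≤ ‖expE (1/2 + θ) - 1‖ := by
        have := expE_half_lower θ hθ1
        linarith
      rw [hE] at hd
      linarith
    linarith
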